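/- Let ζ = exp(2πi/8) ∈ ℂ. There do not exist natural numbers f₁, f₃, f₅, f₇ such that 1 + ζ + ζ² + ζ³ = 1 + f₁·ζ/(1 − ζ) + f₃·ζ³/(1 − ζ³) + f₅·ζ⁵/(1 − ζ⁵) + f₇·ζ⁷/(1 − ζ⁷). -/

import Mathlib

open Complex Real

lemma re_frac_half (z : ℂ) (hz : ‖z‖ = 1) (h1 : z ≠ 1) :
    (z / (1 - z)).re = -(1/2) := by
  have hn : Complex.normSq z = 1 := by
    rw [← Complex.sq_norm, hz]; norm_num
  have h2 : z.re * z.re + z.im * z.im = 1 := by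
    simpa [Complex.normSq_apply] using hn
  have hrele : z.re ≤ 1 := by nlinarith [sq_nonneg (z.re - 1), mul_self_nonneg z.im]
  have hre : z.re ≠ 1 := by
    intro h
    apply h1
    have him : z.im = 0 := by nlinarith
    exact Complex.ext (by simp [h]) (by simp [him])
  have hrelt : z.re < 1 := lt_of_le_of_ne hrele hre
  have hden : Complex.normSq (1 - z) = 2 * (1 - z.re) := by
    have : Complex.normSq (1 - z) = (1 - z.re) * (1 - z.re) + (0 - z.im) * (0 - z.im) := by
      simp [Complex.normSq_apply]
    rw [this]; nlinarith
  have hd0 : (2 : ℝ) * (1 - z.re) ≠ 0 := by nlinarith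
  rw [Complex.div_re, hden]
  simp only [Complex.sub_re, Complex.sub_im, Complex.one_re, Complex.one_im]
  field_simp
  nlinarith

theorem no_eichler_solution_order_eight :
    ¬ ∃ f₁ f₃ f₅ f₇ : ℕ,
      letI ζ : ℂ := Complex.exp (2 * Real.pi * Complex.I / 8)
      (1 + ζ + ζ ^ 2 + ζ ^ 3 : ℂ) =
        1 + (f₁ : ℂ) * (ζ / (1 - ζ)) + (f₃ : ℂ) * (ζ ^ 3 / (1 - ζ ^ 3))
          + (f₅ : ℂ) * (ζ ^ 5 / (1 - ζ ^ 5)) + (f₇ : ℂ) * (ζ ^ 7 / (1 - ζ ^ 7)) := by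
  rintro ⟨f₁, f₃, f₅, f₇, h⟩
  set ζ : ℂ := Complex.exp (2 * Real.pi * Complex.I / 8) with hζdef
  have hζ : ζ = Complex.exp ((Real.pi/4 : ℝ) * Complex.I) := by
    rw [hζdef]; congr 1; push_cast; ring
  have hpow : ∀ k : ℕ, ζ ^ k = Complex.exp (((k * Real.pi/4 : ℝ) : ℂ) * Complex.I) := by
    intro k
    rw [hζ, ← Complex.exp_nat_mul]
    congr 1
    push_cast
    ring
  have habs : ∀ k : ℕ, ‖ζ ^ k‖ = 1 := by
    intro k; rw [hpow k]; exact Complex.norm_exp_ofReal_mul_I _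
  have him : ∀ k : ℕ, (ζ ^ k).im = Real.sin (k * Real.pi / 4) := by
    intro k; rw [hpow k]; exact Complex.exp_ofReal_mul_I_im _
  have hre : ∀ k : ℕ, (ζ ^ k).re = Real.cos (k * Real.pi / 4) := by
    intro k; rw [hpow k]; exact Complex.exp_ofReal_mul_I_re _
  have hs4 : Real.sin (Real.pi / 4) > 0 :=
    Real.sin_pos_of_pos_of_lt_pi (by positivity) (by linarith [Real.pi_pos])
  have hs34 : Real.sin (3 * Real.pi / 4) = Real.sin (Real.pi / 4) := by
    rw [show 3 * Real.pi / 4 = Real.pi - Real.pi / 4 by ring, Real.sin_pi_sub]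
  have hs54 : Real.sin (5 * Real.pi / 4) = -Real.sin (Real.pi / 4) := by
    rw [show 5 * Real.pi / 4 = Real.pi + Real.pi / 4 by ring, Real.sin_add]
    simp
  have hs74 : Real.sin (7 * Real.pi / 4) = -Real.sin (Real.pi / 4) := by
    rw [show 7 * Real.pi / 4 = Real.pi + 3 * Real.pi / 4 by ring, Real.sin_add]
    simp [hs34]
  have hne : ∀ k : ℕ, Real.sin (k * Real.pi / 4) ≠ 0 → ζ ^ k ≠ 1 := by
    intro k hk heq
    apply hk
    have := congrArg Complex.im heq
    rw [him k] at this
    simpa using this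
  have hfrac : ∀ k : ℕ, Real.sin (k * Real.pi / 4) ≠ 0 →
      (ζ ^ k / (1 - ζ ^ k)).re = -(1/2) := fun k hk =>
    re_frac_half _ (habs k) (hne k hk)
  have hf1 : (ζ / (1 - ζ)).re = -(1/2) := by
    rw [← pow_one ζ]
    exact hfrac 1 (by push_cast; rw [one_mul]; linarith)
  have hf3 := hfrac 3 (by push_cast; rw [hs34]; linarith)
  have hf5 := hfrac 5 (by push_cast; rw [hs54]; linarith)
  have hf7 := hfrac 7 (by push_cast; rw [hs74]; linarith)
  have hreζ : ζ.re = Real.cos (Real.pi / 4) := by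
    have := hre 1; rw [pow_one] at this; rw [this]; norm_num
  have himζ : ζ.im = Real.sin (Real.pi / 4) := by
    have := him 1; rw [pow_one] at this; rw [this]; norm_num
  -- real part of the equation
  have hr := congrArg Complex.re h
  simp only [Complex.add_re, Complex.mul_re, Complex.natCast_re, Complex.natCast_im,
    Complex.one_re, zero_mul, sub_zero, hf1, hf3, hf5, hf7, hre, hreζ] at hr
  have hc2 : Real.cos ((2 : ℕ) * Real.pi / 4) = 0 := by
    rw [show (2:ℕ) * Real.pi / 4 = Real.pi / 2 by push_cast; ring, Real.cos_pi_div_two]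
  have hc3 : Real.cos ((3 : ℕ) * Real.pi / 4) = -Real.cos (Real.pi / 4) := by
    rw [show (3:ℕ) * Real.pi / 4 = Real.pi - Real.pi / 4 by push_cast; ring, Real.cos_pi_sub]
  rw [hc2, hc3] at hr
  have hsum : (f₁ : ℝ) + f₃ + f₅ + f₇ = 0 := by linarith
  have hsum' : f₁ + f₃ + f₅ + f₇ = 0 := by exact_mod_cast hsum
  have e1 : f₁ = 0 := by omega
  have e3 : f₃ = 0 := by omega
  have e5 : f₅ = 0 := by omega
  have e7 : f₇ = 0 := by omega
  subst e1 e3 e5 e7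
  have hi := congrArg Complex.im h
  simp only [Nat.cast_zero, zero_mul, add_zero, Complex.add_im, Complex.one_im, him, himζ,
    Nat.cast_ofNat] at hi
  have hs24 : Real.sin (2 * Real.pi / 4) = 1 := by
    rw [show 2 * Real.pi / 4 = Real.pi / 2 by ring, Real.sin_pi_div_two]
  rw [hs24, hs34] at hi
  linarith
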